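/- Suppose there exists i₀ with max(z_{i₀},0) < ‖w‖, ∑_i max(−z_i,0) < ‖w‖, and λ > 0 satisfies λ‖w‖ = ∑_i max(‖w‖ − (λ+1)z_i, 0). Then the projection of (z,w) onto L is ([z − ‖w‖/(λ+1) e]^+ + ‖w‖/(λ+1) e, w/(λ+1)). -/

import Mathlib

set_option maxHeartbeats 1000000

private lemma expand_sq {E : Type*} [NormedAddCommGroup E] [InnerProductSpace ℝ E]
    (v b a : E) :
    ‖v - a‖^2 = ‖v - b‖^2 + 2 * (inner ℝ (v - b) (b - a) : ℝ) + ‖b - a‖^2 := by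
  have h : v - a = (v - b) + (b - a) := by abel
  rw [h, norm_add_sq_real]

theorem proj_L_case3
    (p q : ℕ) (hp : 0 < p) (hq : 0 < q)
    (L : Set (EuclideanSpace ℝ (Fin p) × EuclideanSpace ℝ (Fin q)))
    (hL : L = {xu | ∀ i : Fin p, ‖xu.2‖ ≤ xu.1 i})
    (z : EuclideanSpace ℝ (Fin p)) (w : EuclideanSpace ℝ (Fin q)) (hw : w ≠ 0)
    (h1 : ∃ i : Fin p, max (z i) 0 < ‖w‖)
    (h2 : ∑ i : Fin p, max (-z i) 0 < ‖w‖)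
    (lam : ℝ) (hlam : 0 < lam)
    (heq : lam * ‖w‖ = ∑ i : Fin p, max (‖w‖ - (lam + 1) * z i) 0) :
    (((WithLp.equiv 2 _).symm (fun i => max (z i - ‖w‖ / (lam + 1)) 0 + ‖w‖ / (lam + 1)),
        (1 / (lam + 1)) • w) ∈ L ∧
      (∀ a ∈ L,
        ‖z - (WithLp.equiv 2 _).symm (fun i => max (z i - ‖w‖ / (lam + 1)) 0 + ‖w‖ / (lam + 1))‖ ^ 2
            + ‖w - (1 / (lam + 1)) • w‖ ^ 2
          ≤ ‖z - a.1‖ ^ 2 + ‖w - a.2‖ ^ 2)) ∧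
      ∀ b ∈ L, (∀ a ∈ L, ‖z - b.1‖ ^ 2 + ‖w - b.2‖ ^ 2 ≤ ‖z - a.1‖ ^ 2 + ‖w - a.2‖ ^ 2) →
        b = ((WithLp.equiv 2 _).symm (fun i => max (z i - ‖w‖ / (lam + 1)) 0 + ‖w‖ / (lam + 1)),
          (1 / (lam + 1)) • w) := by
  have hl1 : (0:ℝ) < lam + 1 := by linarith
  set μ : ℝ := ‖w‖ / (lam + 1) with hμ
  set xs : EuclideanSpace ℝ (Fin p) :=
    (WithLp.equiv 2 _).symm (fun i => max (z i - μ) 0 + μ) with hxs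
  set us : EuclideanSpace ℝ (Fin q) := (1 / (lam + 1)) • w with hus
  have hxs_apply : ∀ i, xs i = max (z i - μ) 0 + μ := fun i => rfl
  have hwμ : ‖w‖ = (lam + 1) * μ := by rw [hμ, mul_div_assoc', mul_div_cancel_left₀ _ (ne_of_gt hl1)]
  have hus_norm : ‖us‖ = μ := by
    rw [hus, norm_smul, Real.norm_eq_abs, abs_of_pos (by positivity), hμ]
    ring
  -- membership
  have hmem : (xs, us) ∈ L := by
    rw [hL]
    intro i
    simp only [hus_norm, hxs_apply]
    have := le_max_right (z i - μ) 0
    linarith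
  -- notation for c
  set c : Fin p → ℝ := fun i => max (μ - z i) 0 with hc
  have hc_nonneg : ∀ i, 0 ≤ c i := fun i => le_max_right _ _
  have hsum_c : ∑ i, c i = lam * μ := by
    have h1 : ∀ i, max (‖w‖ - (lam + 1) * z i) 0 = (lam + 1) * c i := by
      intro i
      rw [hc]
      rw [mul_max_of_nonneg _ _ (le_of_lt hl1), mul_zero, hwμ]
      ring_nf
    have h2 : lam * ((lam + 1) * μ) = ∑ i, (lam + 1) * c i := by
      rw [← hwμ]; rw [heq]; exact Finset.sum_congr rfl (fun i _ => h1 i)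
    rw [← Finset.mul_sum] at h2
    have := mul_left_cancel₀ (ne_of_gt hl1) (by linarith : (lam+1) * (lam * μ) = (lam+1) * ∑ i, c i)
    linarith [this]
  -- the variational inequality
  have hVI : ∀ a ∈ L,
      (inner ℝ (z - xs) (a.1 - xs) : ℝ) + (inner ℝ (w - us) (a.2 - us) : ℝ) ≤ 0 := by
    intro a ha
    rw [hL] at ha
    have hx : ∀ i, ‖a.2‖ ≤ a.1 i := ha
    -- first inner product
    have hinner1 : (inner ℝ (z - xs) (a.1 - xs) : ℝ) = -∑ i, c i * (a.1 i - μ) := by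
      rw [show (inner ℝ (z - xs) (a.1 - xs) : ℝ) = ∑ i, (z - xs) i * (a.1 - xs) i by
        simp [PiLp.inner_apply, RCLike.inner_apply, conj_trivial, mul_comm]]
      rw [← Finset.sum_neg_distrib]
      refine Finset.sum_congr rfl (fun i _ => ?_)
      have h1 : (z - xs) i = z i - xs i := rfl
      have h2 : (a.1 - xs) i = a.1 i - xs i := rfl
      rw [h1, h2, hxs_apply]
      rcases le_total (z i) μ with h | h
      · rw [show c i = μ - z i from max_eq_left (by linarith),
          max_eq_right (by linarith)]
        ring
      · rw [show c i = 0 from max_eq_right (by linarith),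
          max_eq_left (by linarith)]
        ring
    -- second inner product
    have hwus : w - us = (lam / (lam + 1)) • w := by
      rw [hus]
      rw [show w - (1/(lam+1)) • w = (1 - 1/(lam+1)) • w by rw [sub_smul, one_smul]]
      congr 1
      field_simp
      ring
    have hinner2 : (inner ℝ (w - us) (a.2 - us) : ℝ)
        = (lam / (lam + 1)) * ((inner ℝ w a.2 : ℝ) - (1/(lam+1)) * ‖w‖^2) := by
      rw [hwus, real_inner_smul_left, inner_sub_right, hus, real_inner_smul_right,
        real_inner_self_eq_norm_sq]
    have hwu : (inner ℝ w a.2 : ℝ) ≤ ‖w‖ * ‖a.2‖ := real_inner_le_norm w a.2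
    have hbound2 : (inner ℝ (w - us) (a.2 - us) : ℝ) ≤ lam * μ * ‖a.2‖ - lam * μ * μ := by
      rw [hinner2]
      have hpos : 0 < lam / (lam + 1) := by positivity
      have : (lam / (lam+1)) * ((inner ℝ w a.2 : ℝ) - (1/(lam+1)) * ‖w‖^2)
          ≤ (lam / (lam+1)) * (‖w‖ * ‖a.2‖ - (1/(lam+1)) * ‖w‖^2) := by
        apply mul_le_mul_of_nonneg_left (by linarith) (le_of_lt hpos)
      refine this.trans (le_of_eq ?_)
      rw [hwμ]
      field_simp
    have hbound1 : lam * μ * ‖a.2‖ - lam * μ * μ ≤ ∑ i, c i * (a.1 i - μ) := by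
      have : ∑ i, c i * (‖a.2‖ - μ) ≤ ∑ i, c i * (a.1 i - μ) := by
        apply Finset.sum_le_sum
        intro i _
        apply mul_le_mul_of_nonneg_left (by linarith [hx i]) (hc_nonneg i)
      calc lam * μ * ‖a.2‖ - lam * μ * μ = (∑ i, c i) * (‖a.2‖ - μ) := by
            rw [hsum_c]; ring
        _ = ∑ i, c i * (‖a.2‖ - μ) := by rw [Finset.sum_mul]
        _ ≤ _ := this
    rw [hinner1]
    linarith
  -- expansion identity
  have hexp : ∀ a : EuclideanSpace ℝ (Fin p) × EuclideanSpace ℝ (Fin q),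
      ‖z - a.1‖^2 + ‖w - a.2‖^2
        = ‖z - xs‖^2 + ‖w - us‖^2
          - 2 * ((inner ℝ (z - xs) (a.1 - xs) : ℝ) + (inner ℝ (w - us) (a.2 - us) : ℝ))
          + (‖xs - a.1‖^2 + ‖us - a.2‖^2) := by
    intro a
    have e1 := expand_sq z xs a.1
    have e2 := expand_sq w us a.2
    have i1 : (inner ℝ (z - xs) (xs - a.1) : ℝ) = -(inner ℝ (z - xs) (a.1 - xs) : ℝ) := by
      rw [show xs - a.1 = -(a.1 - xs) by abel, inner_neg_right]
    have i2 : (inner ℝ (w - us) (us - a.2) : ℝ) = -(inner ℝ (w - us) (a.2 - us) : ℝ) := by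
      rw [show us - a.2 = -(a.2 - us) by abel, inner_neg_right]
    rw [e1, e2, i1, i2]
    ring
  have hmin : ∀ a ∈ L, ‖z - xs‖^2 + ‖w - us‖^2 ≤ ‖z - a.1‖^2 + ‖w - a.2‖^2 := by
    intro a ha
    rw [hexp a]
    have := hVI a ha
    nlinarith [sq_nonneg ‖xs - a.1‖, sq_nonneg ‖us - a.2‖]
  refine ⟨⟨hmem, hmin⟩, ?_⟩
  intro b hb hbmin
  have h1 := hbmin (xs, us) hmem
  have h2 := hexp b
  have h3 := hVI b hb
  have h4 : ‖xs - b.1‖^2 + ‖us - b.2‖^2 ≤ 0 := by linarith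
  have h5 : ‖xs - b.1‖ = 0 ∧ ‖us - b.2‖ = 0 := by
    constructor <;> nlinarith [sq_nonneg ‖xs - b.1‖, sq_nonneg ‖us - b.2‖,
      norm_nonneg (xs - b.1), norm_nonneg (us - b.2)]
  have e1 : b.1 = xs := by
    have := norm_eq_zero.mp h5.1; rwa [sub_eq_zero, eq_comm] at this
  have e2 : b.2 = us := by
    have := norm_eq_zero.mp h5.2; rwa [sub_eq_zero, eq_comm] at this
  exact Prod.ext e1 e2
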